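/- For the bistar B(m,n) with m ≤ n, we have r(B(m,n)) ≥ 2m + n + 2: the 2-coloring of K_{2m+n+1} formed by two disjoint blue cliques of sizes m+n+1 and m with all crossing edges red contains no monochromatic copy of B(m,n). -/

import Mathlib

open SimpleGraph

/-- The graph of edges of color `b` in the 2-coloring `c` of a complete graph. -/
def colorGraph {V : Type*} (c : Sym2 V → Bool) (b : Bool) : SimpleGraph V :=
  SimpleGraph.fromRel (fun u v => c s(u, v) = b)

/-- `G` occurs as a (not nec. induced) subgraph of `H`. -/
def ContainsCopy {V W : Type*} (G : SimpleGraph V) (H : SimpleGraph W) : Prop :=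
  ∃ f : V → W, Function.Injective f ∧ ∀ ⦃u v : V⦄, G.Adj u v → H.Adj (f u) (f v)

/-- The coloring `c` contains a monochromatic copy of `G`. -/
def HasMonoCopy {V W : Type*} (G : SimpleGraph V) (c : Sym2 W → Bool) : Prop :=
  ∃ b : Bool, ContainsCopy G (colorGraph c b)

/-- The (diagonal) Ramsey number of a graph `G`. -/
noncomputable def ramseyNumber {V : Type*} (G : SimpleGraph V) : ℕ :=
  sInf {r : ℕ | ∀ c : Sym2 (Fin r) → Bool, HasMonoCopy G c}

/-- The star `S n = K_{1,n}`: center `0`, `n` leaves. -/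
def starGraph (n : ℕ) : SimpleGraph (Fin (n + 1)) :=
  SimpleGraph.fromRel (fun u v => u = 0)

/-- The bistar `B(m,n)`: adjacent centers `inl 0`, `inl 1`, with `m` resp. `n` leaves. -/
def bistar (m n : ℕ) : SimpleGraph (Fin 2 ⊕ Fin m ⊕ Fin n) :=
  SimpleGraph.fromRel (fun u v =>
    (u = Sum.inl 0 ∧ v = Sum.inl 1) ∨
    (u = Sum.inl 0 ∧ ∃ i, v = Sum.inr (Sum.inl i)) ∨
    (u = Sum.inl 1 ∧ ∃ j, v = Sum.inr (Sum.inr j)))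

lemma colorGraph_adj {V : Type*} (c : Sym2 V → Bool) (b : Bool) (u v : V) :
    (colorGraph c b).Adj u v ↔ u ≠ v ∧ c s(u, v) = b := by
  unfold colorGraph
  rw [SimpleGraph.fromRel_adj]
  constructor
  · rintro ⟨h1, h2 | h2⟩
    · exact ⟨h1, h2⟩
    · exact ⟨h1, by rwa [Sym2.eq_swap]⟩
  · rintro ⟨h1, h2⟩
    exact ⟨h1, Or.inl h2⟩

lemma bistar_adj_centers (m n : ℕ) : (bistar m n).Adj (Sum.inl 0) (Sum.inl 1) := by
  rw [bistar, SimpleGraph.fromRel_adj]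
  exact ⟨by simp, Or.inl (Or.inl ⟨rfl, rfl⟩)⟩

lemma bistar_adj_left (m n : ℕ) (i : Fin m) :
    (bistar m n).Adj (Sum.inl 0) (Sum.inr (Sum.inl i)) := by
  rw [bistar, SimpleGraph.fromRel_adj]
  exact ⟨by simp, Or.inl (Or.inr (Or.inl ⟨rfl, i, rfl⟩))⟩

lemma bistar_adj_right (m n : ℕ) (j : Fin n) :
    (bistar m n).Adj (Sum.inl 1) (Sum.inr (Sum.inr j)) := by
  rw [bistar, SimpleGraph.fromRel_adj]
  exact ⟨by simp, Or.inl (Or.inr (Or.inr ⟨rfl, j, rfl⟩))⟩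

/-- Key construction: an edge of color b whose endpoints have enough b-neighbors yields
a monochromatic bistar. -/
lemma key_copy {V : Type*} [DecidableEq V] (c : Sym2 V → Bool) (b : Bool) (m n : ℕ)
    (u v : V) (huv : u ≠ v) (hc : c s(u, v) = b)
    (Nu Nv : Finset V)
    (hNu : ∀ w ∈ Nu, w ≠ u ∧ c s(u, w) = b)
    (hNv : ∀ w ∈ Nv, w ≠ v ∧ c s(v, w) = b)
    (hu : m + n + 1 ≤ Nu.card) (hv : n + 1 ≤ Nv.card) :
    HasMonoCopy (bistar m n) c := by
  obtain ⟨Lv, hLvsub, hLvcard⟩ := Finset.exists_subset_card_eq (s := Nv.erase u) (n := n) (by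
    have := Finset.pred_card_le_card_erase (a := u) (s := Nv); omega)
  obtain ⟨Lu, hLusub, hLucard⟩ :=
    Finset.exists_subset_card_eq (s := Nu \ insert v Lv) (n := m) (by
      have h1 := Finset.le_card_sdiff (insert v Lv) Nu
      have h2 := Finset.card_insert_le v Lv
      omega)
  have eu : Fin m ≃ {x // x ∈ Lu} := (Lu.equivFin.trans (finCongr hLucard)).symm
  have ev : Fin n ≃ {x // x ∈ Lv} := (Lv.equivFin.trans (finCongr hLvcard)).symm
  have hLu_mem : ∀ i : Fin m, ((eu i : V) ∈ Nu ∧ (eu i : V) ≠ u) ∧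
      (eu i : V) ≠ v ∧ (eu i : V) ∉ Lv := by
    intro i
    have h1 := hLusub (eu i).2
    rw [Finset.mem_sdiff, Finset.mem_insert] at h1
    push_neg at h1
    exact ⟨⟨h1.1, (hNu _ h1.1).1⟩, h1.2.1, h1.2.2⟩
  have hLv_mem : ∀ j : Fin n, (ev j : V) ∈ Nv ∧ (ev j : V) ≠ u ∧ (ev j : V) ≠ v := by
    intro j
    have h1 := hLvsub (ev j).2
    rw [Finset.mem_erase] at h1
    exact ⟨h1.2, h1.1, (hNv _ h1.2).1⟩
  have heuinj : ∀ i i' : Fin m, (eu i : V) = (eu i' : V) → i = i' := by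
    intro i i' h
    exact eu.injective (Subtype.ext h)
  have hevinj : ∀ j j' : Fin n, (ev j : V) = (ev j' : V) → j = j' := by
    intro j j' h
    exact ev.injective (Subtype.ext h)
  have heune : ∀ (i : Fin m) (j : Fin n), (eu i : V) ≠ (ev j : V) := by
    intro i j h
    exact (hLu_mem i).2.2 (h ▸ (ev j).2)
  let g : Fin 2 ⊕ Fin m ⊕ Fin n → V := fun a =>
    match a with
    | Sum.inl x => ![u, v] x
    | Sum.inr (Sum.inl i) => (eu i : V)
    | Sum.inr (Sum.inr j) => (ev j : V)
  have hg0 : g (Sum.inl 0) = u := rfl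
  have hg1 : g (Sum.inl 1) = v := rfl
  refine ⟨b, g, ?_, ?_⟩
  · rintro (x | i | j) (x' | i' | j') h <;> simp only [g] at h
    · fin_cases x <;> fin_cases x' <;>
        first
          | rfl
          | exact absurd h huv
          | exact absurd h.symm huv
    · fin_cases x <;>
        [exact absurd h.symm (hLu_mem i').1.2; exact absurd h.symm (hLu_mem i').2.1]
    · fin_cases x <;>
        [exact absurd h.symm (hLv_mem j').2.1; exact absurd h.symm (hLv_mem j').2.2]
    · fin_cases x' <;>
        [exact absurd h (hLu_mem i).1.2; exact absurd h (hLu_mem i).2.1]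
    · exact congrArg (Sum.inr ∘ Sum.inl) (heuinj i i' h)
    · exact absurd h (heune i j')
    · fin_cases x' <;>
        [exact absurd h (hLv_mem j).2.1; exact absurd h (hLv_mem j).2.2]
    · exact absurd h.symm (heune i' j)
    · exact congrArg (Sum.inr ∘ Sum.inr) (hevinj j j' h)
  · have base : ∀ p q : Fin 2 ⊕ Fin m ⊕ Fin n,
        ((p = Sum.inl 0 ∧ q = Sum.inl 1) ∨
         (p = Sum.inl 0 ∧ ∃ i, q = Sum.inr (Sum.inl i)) ∨
         (p = Sum.inl 1 ∧ ∃ j, q = Sum.inr (Sum.inr j))) →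
        (colorGraph c b).Adj (g p) (g q) := by
      rintro p q (⟨rfl, rfl⟩ | ⟨rfl, i, rfl⟩ | ⟨rfl, j, rfl⟩) <;>
        rw [colorGraph_adj]
      · exact ⟨huv, hc⟩
      · exact ⟨Ne.symm (hLu_mem i).1.2, (hNu _ (hLu_mem i).1.1).2⟩
      · exact ⟨Ne.symm (hLv_mem j).2.2, (hNv _ (hLv_mem j).1).2⟩
    intro a a' hadj
    rw [bistar, SimpleGraph.fromRel_adj] at hadj
    rcases hadj.2 with h | h
    · exact base _ _ h
    · exact (base _ _ h).symm

/-- Any 2-coloring of a complete graph on `2(m+n)+3` vertices contains a mono bistar. -/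
lemma exists_mono (m n : ℕ) (c : Sym2 (Fin (2 * (m + n) + 3)) → Bool) :
    HasMonoCopy (bistar m n) c := by
  classical
  have hN : (2 * (m + n) + 3) = 2 * (m + n) + 3 := rfl
  set deg : Bool → Fin (2 * (m + n) + 3) → ℕ :=
    fun b u => ((Finset.univ.erase u).filter (fun w => c s(u, w) = b)).card with hdeg
  have hdegsum : ∀ u : Fin (2 * (m + n) + 3), deg true u + deg false u = 2 * (m + n) + 2 := by
    intro u
    have h1 := Finset.card_filter_add_card_filter_not
      (s := Finset.univ.erase u) (p := fun w => c s(u, w) = true)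
    have h2 : (Finset.univ.erase u).filter (fun w => ¬ c s(u, w) = true) =
        (Finset.univ.erase u).filter (fun w => c s(u, w) = false) := by
      apply Finset.filter_congr
      intro w _
      simp
    have h3 : (Finset.univ.erase u).card = 2 * (m + n) + 2 := by
      rw [Finset.card_erase_of_mem (Finset.mem_univ u), Finset.card_univ, Fintype.card_fin]
      omega
    rw [h2, h3] at h1
    simpa [hdeg] using h1
  set f : Fin (2 * (m + n) + 3) → Bool := fun u => decide (m + n + 1 ≤ deg true u) with hf
  have hfdeg : ∀ u b, f u = b → m + n + 1 ≤ deg b u := by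
    intro u b hb
    cases b
    · have : ¬ (m + n + 1 ≤ deg true u) := by
        intro h; rw [hf] at hb; simp [h] at hb
      have := hdegsum u; omega
    · rw [hf] at hb; exact of_decide_eq_true hb
  -- pigeonhole on colors
  have hpig : ∃ b : Bool, m + n + 2 ≤ (Finset.univ.filter (fun u => f u = b)).card := by
    by_contra hcon
    push_neg at hcon
    have h1 := Finset.card_filter_add_card_filter_not
      (s := (Finset.univ : Finset (Fin (2 * (m + n) + 3)))) (p := fun u => f u = true)
    have h2 : (Finset.univ : Finset (Fin (2 * (m + n) + 3))).filter (fun u => ¬ f u = true) =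
        Finset.univ.filter (fun u => f u = false) := by
      apply Finset.filter_congr; intro w _; simp
    rw [h2, Finset.card_univ, Fintype.card_fin] at h1
    have ht := hcon true
    have hfa := hcon false
    omega
  obtain ⟨b, hb⟩ := hpig
  set S := Finset.univ.filter (fun u => f u = b) with hS
  have hSdeg : ∀ u ∈ S, m + n + 1 ≤ deg b u := by
    intro u hu
    rw [hS, Finset.mem_filter] at hu
    exact hfdeg u b hu.2
  by_cases hedge : ∃ u ∈ S, ∃ v ∈ S, u ≠ v ∧ c s(u, v) = b
  · obtain ⟨u, hus, v, hvs, huv, hcuv⟩ := hedge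
    refine key_copy c b m n u v huv hcuv
      ((Finset.univ.erase u).filter (fun w => c s(u, w) = b))
      ((Finset.univ.erase v).filter (fun w => c s(v, w) = b))
      ?_ ?_ (hSdeg u hus) (le_trans (by omega) (hSdeg v hvs))
    · intro w hw
      rw [Finset.mem_filter, Finset.mem_erase] at hw
      exact ⟨hw.1.1, hw.2⟩
    · intro w hw
      rw [Finset.mem_filter, Finset.mem_erase] at hw
      exact ⟨hw.1.1, hw.2⟩
  · push_neg at hedge
    have hnotb : ∀ u ∈ S, ∀ v ∈ S, u ≠ v → c s(u, v) = !b := by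
      intro u hu v hv huv
      have := hedge u hu v hv huv
      revert this
      cases b <;> cases hcb : c s(u, v) <;> simp
    obtain ⟨u, hus, v, hvs, huv⟩ := Finset.one_lt_card.mp (show 1 < S.card by omega)
    refine key_copy c (!b) m n u v huv (hnotb u hus v hvs huv)
      (S.erase u) (S.erase v) ?_ ?_ ?_ ?_
    · intro w hw
      rw [Finset.mem_erase] at hw
      exact ⟨hw.1, hnotb u hus w hw.2 (Ne.symm hw.1)⟩
    · intro w hw
      rw [Finset.mem_erase] at hw
      exact ⟨hw.1, hnotb v hvs w hw.2 (Ne.symm hw.1)⟩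
    · have := Finset.card_erase_of_mem hus; omega
    · have := Finset.card_erase_of_mem hvs; omega

lemma no_mono (m n : ℕ) (hmn : m ≤ n) (c : Sym2 (Fin (2 * m + n + 1)) → Bool)
    (hcol : ∀ u v : Fin (2 * m + n + 1), u ≠ v →
      (c s(u, v) = true ↔ (((u : ℕ) < m + n + 1) ↔ ((v : ℕ) < m + n + 1)))) :
    ¬ HasMonoCopy (bistar m n) c := by
  rintro ⟨b, g, hginj, hgadj⟩
  have hiff : ∀ a a', (bistar m n).Adj a a' →
      (c s(g a, g a') = b ∧ (c s(g a, g a') = true ↔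
        (((g a : ℕ) < m + n + 1) ↔ ((g a' : ℕ) < m + n + 1)))) := by
    intro a a' h
    have h1 := hgadj h
    rw [colorGraph_adj] at h1
    exact ⟨h1.2, hcol _ _ h1.1⟩
  cases b
  · -- red: adjacent vertices lie in different classes
    have hne : ∀ a a', (bistar m n).Adj a a' →
        ¬ (((g a : ℕ) < m + n + 1) ↔ ((g a' : ℕ) < m + n + 1)) := by
      intro a a' h hq
      have h1 := hiff a a' h
      rw [h1.2.mpr hq] at h1
      exact Bool.noConfusion h1.1
    have h01 := hne _ _ (bistar_adj_centers m n)
    by_cases h0 : (g (Sum.inl 0) : ℕ) < m + n + 1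
    · -- center 1 and the m leaves of center 0 are all in the small class
      have h1 : ¬ (g (Sum.inl 1) : ℕ) < m + n + 1 := fun h => h01 (iff_of_true h0 h)
      have hleaf : ∀ i : Fin m, ¬ (g (Sum.inr (Sum.inl i)) : ℕ) < m + n + 1 := by
        intro i h
        exact hne _ _ (bistar_adj_left m n i) (iff_of_true h0 h)
      let F : Option (Fin m) → Fin m := fun o =>
        match o with
        | none => ⟨(g (Sum.inl 1) : ℕ) - (m + n + 1), by
            have := (g (Sum.inl 1)).isLt; omega⟩
        | some i => ⟨(g (Sum.inr (Sum.inl i)) : ℕ) - (m + n + 1), by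
            have := (g (Sum.inr (Sum.inl i))).isLt
            have := hleaf i; omega⟩
      have hFinj : Function.Injective F := by
        rintro (_ | i) (_ | i') h <;> simp only [F, Fin.mk.injEq] at h
        · rfl
        · exfalso
          have hv : (g (Sum.inl 1) : ℕ) = (g (Sum.inr (Sum.inl i')) : ℕ) := by
            have := hleaf i'; omega
          exact Sum.inl_ne_inr (hginj (Fin.ext hv))
        · exfalso
          have hv : (g (Sum.inr (Sum.inl i)) : ℕ) = (g (Sum.inl 1) : ℕ) := by
            have := hleaf i; omega
          exact Sum.inr_ne_inl (hginj (Fin.ext hv))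
        · have hv : (g (Sum.inr (Sum.inl i)) : ℕ) = (g (Sum.inr (Sum.inl i')) : ℕ) := by
            have := hleaf i; have := hleaf i'; omega
          have := hginj (Fin.ext hv)
          simp only [Sum.inr.injEq, Sum.inl.injEq] at this
          rw [this]
      have hcard := Fintype.card_le_of_injective F hFinj
      simp only [Fintype.card_option, Fintype.card_sum, Fintype.card_fin] at hcard
      omega
    · -- center 0 and the n leaves of center 1 are all in the small class
      have h1 : (g (Sum.inl 1) : ℕ) < m + n + 1 := by
        by_contra h1
        exact h01 (iff_of_false h0 h1)
      have hleaf : ∀ j : Fin n, ¬ (g (Sum.inr (Sum.inr j)) : ℕ) < m + n + 1 := by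
        intro j h
        exact hne _ _ (bistar_adj_right m n j) (iff_of_true h1 h)
      let F : Option (Fin n) → Fin m := fun o =>
        match o with
        | none => ⟨(g (Sum.inl 0) : ℕ) - (m + n + 1), by
            have := (g (Sum.inl 0)).isLt; omega⟩
        | some j => ⟨(g (Sum.inr (Sum.inr j)) : ℕ) - (m + n + 1), by
            have := (g (Sum.inr (Sum.inr j))).isLt
            have := hleaf j; omega⟩
      have hFinj : Function.Injective F := by
        rintro (_ | j) (_ | j') h <;> simp only [F, Fin.mk.injEq] at h
        · rfl
        · exfalso
          have hv : (g (Sum.inl 0) : ℕ) = (g (Sum.inr (Sum.inr j')) : ℕ) := by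
            have := hleaf j'; omega
          exact Sum.inl_ne_inr (hginj (Fin.ext hv))
        · exfalso
          have hv : (g (Sum.inr (Sum.inr j)) : ℕ) = (g (Sum.inl 0) : ℕ) := by
            have := hleaf j; omega
          exact Sum.inr_ne_inl (hginj (Fin.ext hv))
        · have hv : (g (Sum.inr (Sum.inr j)) : ℕ) = (g (Sum.inr (Sum.inr j')) : ℕ) := by
            have := hleaf j; have := hleaf j'; omega
          have := hginj (Fin.ext hv)
          simp only [Sum.inr.injEq] at this
          rw [this]
      have hcard := Fintype.card_le_of_injective F hFinj
      simp only [Fintype.card_option, Fintype.card_sum, Fintype.card_fin] at hcard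
      omega
  · -- blue: adjacent vertices lie in the same class
    have hsame : ∀ a a', (bistar m n).Adj a a' →
        (((g a : ℕ) < m + n + 1) ↔ ((g a' : ℕ) < m + n + 1)) := by
      intro a a' h
      have h1 := hiff a a' h
      exact h1.2.mp h1.1
    have hall : ∀ a, (((g a : ℕ) < m + n + 1) ↔ ((g (Sum.inl 0) : ℕ) < m + n + 1)) := by
      have h01 := hsame _ _ (bistar_adj_centers m n)
      rintro (x | i | j)
      · fin_cases x
        · exact Iff.rfl
        · exact h01.symm
      · exact (hsame _ _ (bistar_adj_left m n i)).symm
      · exact (hsame _ _ (bistar_adj_right m n j)).symm.trans h01.symm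
    by_cases h0 : (g (Sum.inl 0) : ℕ) < m + n + 1
    · let F : Fin 2 ⊕ Fin m ⊕ Fin n → Fin (m + n + 1) := fun a =>
        ⟨(g a : ℕ), (hall a).mpr h0⟩
      have hFinj : Function.Injective F := by
        intro a a' h
        simp only [F, Fin.mk.injEq] at h
        exact hginj (Fin.ext h)
      have hcard := Fintype.card_le_of_injective F hFinj
      simp only [Fintype.card_option, Fintype.card_sum, Fintype.card_fin] at hcard
      omega
    · let F : Fin 2 ⊕ Fin m ⊕ Fin n → Fin m := fun a =>
        ⟨(g a : ℕ) - (m + n + 1), by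
          have h1 := (g a).isLt
          have h2 : ¬ (g a : ℕ) < m + n + 1 := fun h => h0 ((hall a).mp h)
          omega⟩
      have hFinj : Function.Injective F := by
        intro a a' h
        simp only [F, Fin.mk.injEq] at h
        have h2 : ¬ (g a : ℕ) < m + n + 1 := fun hh => h0 ((hall a).mp hh)
        have h3 : ¬ (g a' : ℕ) < m + n + 1 := fun hh => h0 ((hall a').mp hh)
        exact hginj (Fin.ext (by omega))
      have hcard := Fintype.card_le_of_injective F hFinj
      simp only [Fintype.card_option, Fintype.card_sum, Fintype.card_fin] at hcard
      omega

theorem bistar_ramsey_lower (m n : ℕ) (hmn : m ≤ n) :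
    (∀ c : Sym2 (Fin (2 * m + n + 1)) → Bool,
      (∀ u v : Fin (2 * m + n + 1), u ≠ v →
        (c s(u, v) = true ↔ (((u : ℕ) < m + n + 1) ↔ ((v : ℕ) < m + n + 1)))) →
      ¬ HasMonoCopy (bistar m n) c) ∧
    2 * m + n + 2 ≤ ramseyNumber (bistar m n) := by
  constructor
  · intro c hcol
    exact no_mono m n hmn c hcol
  · rw [ramseyNumber]
    refine le_csInf ⟨2 * (m + n) + 3, fun c => exists_mono m n c⟩ ?_
    intro r hr
    by_contra hlt
    push_neg at hlt
    have hle : r ≤ 2 * m + n + 1 := by omega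
    -- the explicit coloring
    let c0 : Sym2 (Fin (2 * m + n + 1)) → Bool :=
      Sym2.lift ⟨fun u v => decide (((u : ℕ) < m + n + 1) ↔ ((v : ℕ) < m + n + 1)),
        fun u v => decide_eq_decide.mpr Iff.comm⟩
    have hcol : ∀ u v : Fin (2 * m + n + 1), u ≠ v →
        (c0 s(u, v) = true ↔ (((u : ℕ) < m + n + 1) ↔ ((v : ℕ) < m + n + 1))) := by
      intro u v _
      simp [c0]
    -- restrict to Fin r
    obtain ⟨b, g, hginj, hgadj⟩ := hr (fun e => c0 (Sym2.map (Fin.castLE hle) e))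
    refine no_mono m n hmn c0 hcol ⟨b, Fin.castLE hle ∘ g, ?_, ?_⟩
    · exact (Fin.castLE_injective hle).comp hginj
    · intro a a' h
      have h1 := hgadj h
      rw [colorGraph_adj] at h1 ⊢
      refine ⟨fun hq => h1.1 (Fin.castLE_injective hle hq), ?_⟩
      have h2 : s((Fin.castLE hle ∘ g) a, (Fin.castLE hle ∘ g) a') =
          Sym2.map (Fin.castLE hle) s(g a, g a') := by
        rw [Sym2.map_pair_eq]
        rfl
      rw [h2]
      exact h1.2
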